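/- Let q = p^n ≡ 3 (mod 4) be an odd prime power and 1 ≤ r ≤ q-2 an integer. Define the matrix T over F_q by T = [(s_i+s_j)^{q-1-r} + (s_i-s_j)^{q-1-r}]_{1≤i,j≤(q-1)/2}, where s_1, ..., s_{(q-1)/2} are the nonzero squares of F_q. Then det(T) = (-1)^{(q-1)/2} ∏_{k=0}^{(q-3)/2} binom(r+2k, r) modulo p, where the binomial coefficients are interpreted in F_p ⊆ F_q. -/

import Mathlib

open Finset PowerSeries

private lemma sum_range_two_mul' {M : Type*} [AddCommMonoid M] (m : ℕ) (f : ℕ → M) :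
    ∑ k ∈ Finset.range (2 * m), f k = ∑ t ∈ Finset.range m, (f (2 * t) + f (2 * t + 1)) := by
  induction m with
  | zero => simp
  | succ m ih =>
    have : 2 * (m + 1) = (2 * m + 1) + 1 := by ring
    rw [this, Finset.sum_range_succ, Finset.sum_range_succ, ih, Finset.sum_range_succ,
      ← add_assoc]

private lemma prod_Ioi_pair_eq_prod_erase {M : Type*} [CommMonoid M] {m : ℕ}
    (f : Fin m → Fin m → M) :
    ∏ i, ∏ j ∈ Finset.Ioi i, (f i j * f j i) = ∏ i, ∏ j ∈ Finset.univ.erase i, f i j := by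
  have h1 : ∀ i : Fin m, Finset.univ.erase i = Finset.Iio i ∪ Finset.Ioi i := by
    intro i
    ext j
    simp only [Finset.mem_erase, Finset.mem_univ, and_true, Finset.mem_union, Finset.mem_Iio,
      Finset.mem_Ioi]
    exact ne_iff_lt_or_gt
  have h2 : (∏ i, ∏ j ∈ Finset.Ioi i, f j i) = ∏ i, ∏ j ∈ Finset.Iio i, f i j := by
    rw [Finset.prod_comm' (t' := Finset.univ) (s' := fun j => Finset.Iio j)]
    intro i j
    simp only [Finset.mem_univ, true_and, and_true, Finset.mem_Ioi, Finset.mem_Iio]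
  calc ∏ i, ∏ j ∈ Finset.Ioi i, (f i j * f j i)
      = (∏ i, ∏ j ∈ Finset.Ioi i, f i j) * ∏ i, ∏ j ∈ Finset.Ioi i, f j i := by
        rw [← Finset.prod_mul_distrib]
        exact Finset.prod_congr rfl fun i _ => Finset.prod_mul_distrib
    _ = ∏ i, (∏ j ∈ Finset.Iio i, f i j) * ∏ j ∈ Finset.Ioi i, f i j := by
        rw [h2, Finset.prod_mul_distrib, mul_comm]
    _ = ∏ i, ∏ j ∈ Finset.univ.erase i, f i j := by
        refine Finset.prod_congr rfl fun i _ => ?_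
        rw [h1 i, Finset.prod_union]
        exact Finset.disjoint_left.mpr fun j hj hj' => by
          simp only [Finset.mem_Iio, Finset.mem_Ioi] at hj hj'
          exact absurd (hj.trans hj') (lt_irrefl _)

private lemma choose_cast_key (p : ℕ) [Fact p.Prime] {n q : ℕ}
    (F : Type*) [Field F] [CharP F p] (hq : q = p ^ n) (r : ℕ) (hr : r + 1 ≤ q)
    (j : ℕ) (hj : j < q) :
    ((q - 1 - r).choose j : F) = (-1 : F) ^ j * ((r + j).choose r : F) := by
  haveI : CharP F⟦X⟧ p := charP_of_injective_ringHom PowerSeries.C_injective p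
  set G : F⟦X⟧ := PowerSeries.rescale (-1) (invOneSubPow F (r + 1)).val with hGdef
  have hG : (1 + X : F⟦X⟧) ^ (r + 1) * G = 1 := by
    have h0 : ((1 - X : F⟦X⟧)) ^ (r + 1) * (invOneSubPow F (r + 1)).val = 1 := by
      rw [← invOneSubPow_inv_eq_one_sub_pow]
      exact (invOneSubPow F (r + 1)).inv_val
    have h1 := congrArg (PowerSeries.rescale (-1)) h0
    rw [map_mul, map_pow, map_one, map_sub, map_one, rescale_neg_one_X, sub_neg_eq_add] at h1
    exact h1
  have h2 : (1 + X : F⟦X⟧) ^ (q - 1 - r) * (1 + X) ^ (r + 1) = 1 + X ^ q := by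
    rw [← pow_add]
    have he : q - 1 - r + (r + 1) = q := by omega
    rw [he, hq, add_pow_char_pow, one_pow]
  have h3 : ((1 + X : F⟦X⟧) ^ (q - 1 - r)) = G + G * X ^ q := by
    calc (1 + X : F⟦X⟧) ^ (q - 1 - r)
        = (1 + X) ^ (q - 1 - r) * ((1 + X) ^ (r + 1) * G) := by rw [hG, mul_one]
      _ = ((1 + X) ^ (q - 1 - r) * (1 + X) ^ (r + 1)) * G := by ring
      _ = (1 + X ^ q) * G := by rw [h2]
      _ = G + G * X ^ q := by ring
  have h4 := congrArg (PowerSeries.coeff j) h3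
  have hl : PowerSeries.coeff j ((1 + X : F⟦X⟧) ^ (q - 1 - r))
      = ((q - 1 - r).choose j : F) := by
    have hcast : ((((1 + Polynomial.X : Polynomial F) ^ (q - 1 - r) : Polynomial F)) : F⟦X⟧)
        = (1 + X : F⟦X⟧) ^ (q - 1 - r) := by
      push_cast
      rfl
    rw [← hcast, Polynomial.coeff_coe, Polynomial.coeff_one_add_X_pow]
  have hrr : PowerSeries.coeff j (G + G * X ^ q)
      = (-1 : F) ^ j * ((r + j).choose r : F) := by
    rw [map_add, PowerSeries.coeff_mul_X_pow', if_neg (by omega), add_zero, hGdef,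
      coeff_rescale, invOneSubPow_val_succ_eq_mk_add_choose, coeff_mk]
  rw [hl, hrr] at h4
  exact h4


private lemma det_aux (p n q m : ℕ) [Fact p.Prime] (hn : 0 < n) (hq : q = p ^ n)
    (hq3 : q % 4 = 3) (hm2 : 2 * m = q - 1)
    (F : Type*) [Field F] [Fintype F] (hcard : Fintype.card F = q)
    (r : ℕ) (hr1 : 1 ≤ r) (hr2 : r ≤ q - 2)
    (s : Fin m → F) (hs : Function.Injective s)
    (hsimg : ∀ x : F, (∃ i, s i = x) ↔ ∃ y : F, y ≠ 0 ∧ y ^ 2 = x) :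
    (Matrix.of fun i j => (s i + s j) ^ (q - 1 - r) + (s i - s j) ^ (q - 1 - r)).det
      = (-1 : F) ^ m * ∏ k ∈ Finset.range m, ((r + 2 * k).choose r : F) := by
  have hq2 : 2 ≤ q := by omega
  set e : ℕ := q - 1 - r with hedef
  have hmodd : m % 2 = 1 := by omega
  have hm1 : 1 ≤ m := by omega
  have her : e + r = 2 * m := by omega
  have he1 : 1 ≤ e := by omega
  -- characteristic of F
  haveI hFp : CharP F p := by
    haveI hrc := ringChar.charP F
    obtain ⟨n', hprime, hcard'⟩ := FiniteField.card F (ringChar F)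
    have hpq : p ∣ ringChar F ^ (n' : ℕ) := by
      rw [← hcard', hcard, hq]
      exact dvd_pow_self p (by omega)
    have : p = ringChar F :=
      (Nat.prime_dvd_prime_iff_eq Fact.out hprime).mp
        ((Nat.Prime.dvd_of_dvd_pow Fact.out) hpq)
    exact this ▸ hrc
  -- basic facts about s
  have hs0 : ∀ i, s i ≠ 0 := by
    intro i
    obtain ⟨y, hy0, hy2⟩ := (hsimg (s i)).mp ⟨i, rfl⟩
    rw [← hy2]
    exact pow_ne_zero _ hy0
  have hsm : ∀ i, s i ^ m = 1 := by
    intro i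
    obtain ⟨y, hy0, hy2⟩ := (hsimg (s i)).mp ⟨i, rfl⟩
    rw [← hy2, ← pow_mul]
    have h2m : 2 * m = Fintype.card F - 1 := by omega
    rw [h2m]
    exact FiniteField.pow_card_sub_one_eq_one y hy0
  have hpow_mod : ∀ (i : Fin m) (a : ℕ), s i ^ (a % m) = s i ^ a := by
    intro i a
    conv_rhs => rw [← Nat.div_add_mod a m]
    rw [pow_add, pow_mul, hsm, one_pow, one_mul]
  -- (q : F) related casts
  have hneg : ((2 * m : ℕ) : F) = -1 := by
    have hqF : ((q : ℕ) : F) = 0 := by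
      rw [hq, Nat.cast_pow, CharP.cast_eq_zero F p, zero_pow (by omega)]
    rw [hm2, Nat.cast_sub (by omega), hqF, Nat.cast_one, zero_sub]
  -- product of all nonzero squares is 1, and local L1/L2 lemmas
  have hP0 : (∏ j : Fin m, (Polynomial.X - Polynomial.C (s j)))
      = Polynomial.X ^ m - Polynomial.C 1 := by
    set Q : Polynomial F := ∏ j : Fin m, (Polynomial.X - Polynomial.C (s j)) with hQ
    set P : Polynomial F := Polynomial.X ^ m - Polynomial.C 1 with hP
    have hQm : Q.Monic :=
      Polynomial.monic_prod_of_monic _ _ fun j _ => Polynomial.monic_X_sub_C _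
    have hQdeg : Q.natDegree = m := by
      rw [hQ, Polynomial.natDegree_prod _ _ (fun j _ => Polynomial.X_sub_C_ne_zero (s j))]
      simp [Polynomial.natDegree_X_sub_C]
    have hPm : P.Monic := Polynomial.monic_X_pow_sub_C 1 (by omega)
    have hPdeg : P.degree = (m : ℕ) := Polynomial.degree_X_pow_sub_C (by omega) 1
    have hD : P - Q = 0 := by
      by_cases h0 : P - Q = 0
      · exact h0
      · refine Polynomial.eq_zero_of_natDegree_lt_card_of_eval_eq_zero (P - Q) hs ?_ ?_
        · intro i
          rw [Polynomial.eval_sub]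
          have hPe : P.eval (s i) = 0 := by
            rw [hP]
            simp [hsm i]
          have hQe : Q.eval (s i) = 0 := by
            rw [hQ, Polynomial.eval_prod]
            exact Finset.prod_eq_zero (Finset.mem_univ i) (by simp)
          rw [hPe, hQe, sub_zero]
        · rw [Fintype.card_fin]
          rw [Polynomial.natDegree_lt_iff_degree_lt h0]
          have hdlt : (P - Q).degree < P.degree := by
            refine Polynomial.degree_sub_lt ?_ hPm.ne_zero ?_
            · rw [hPdeg, Polynomial.degree_eq_natDegree hQm.ne_zero, hQdeg]
            · rw [hPm.leadingCoeff, hQm.leadingCoeff]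
          rw [hPdeg] at hdlt
          exact hdlt
    have := sub_eq_zero.mp hD
    exact this.symm
  have hprodall : ∏ j : Fin m, s j = 1 := by
    have h0 := congrArg (Polynomial.eval 0) hP0
    rw [Polynomial.eval_prod] at h0
    simp only [Polynomial.eval_sub, Polynomial.eval_pow, Polynomial.eval_X,
      Polynomial.eval_C] at h0
    rw [zero_pow (by omega : m ≠ 0)] at h0
    have hh : ∏ j : Fin m, ((0 : F) - s j) = (∏ _j : Fin m, (-1 : F)) * ∏ j : Fin m, s j := by
      rw [← Finset.prod_mul_distrib]
      exact Finset.prod_congr rfl fun j _ => by ring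
    rw [hh, Finset.prod_const] at h0
    have hcu : (Finset.univ : Finset (Fin m)).card = m := by simp
    rw [hcu, Odd.neg_one_pow (Nat.odd_iff.mpr hmodd)] at h0
    linear_combination -h0
  have hL1 : ∀ i : Fin m, ∏ j ∈ Finset.univ.erase i, (s i - s j) = (m : F) * s i ^ (m - 1) := by
    intro i
    have hgeom := geom_sum₂_mul (Polynomial.X : Polynomial F) (Polynomial.C (s i)) m
    have hCm : (Polynomial.C (s i)) ^ m = Polynomial.C 1 := by
      rw [← map_pow, hsm]
    have hsplit : (Polynomial.X - Polynomial.C (s i)) *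
        ∏ j ∈ Finset.univ.erase i, (Polynomial.X - Polynomial.C (s j))
        = Polynomial.X ^ m - Polynomial.C 1 := by
      rw [← hP0]
      exact Finset.mul_prod_erase Finset.univ
        (fun j => Polynomial.X - Polynomial.C (s j)) (Finset.mem_univ i)
    have hcancel : ∏ j ∈ Finset.univ.erase i, (Polynomial.X - Polynomial.C (s j))
        = ∑ t ∈ Finset.range m,
            (Polynomial.X : Polynomial F) ^ t * (Polynomial.C (s i)) ^ (m - 1 - t) := by
      have hne : (Polynomial.X - Polynomial.C (s i)) ≠ 0 := Polynomial.X_sub_C_ne_zero _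
      apply mul_left_cancel₀ hne
      rw [hsplit, ← hCm, ← hgeom, mul_comm]
    have heval := congrArg (Polynomial.eval (s i)) hcancel
    rw [Polynomial.eval_prod] at heval
    simp only [Polynomial.eval_sub, Polynomial.eval_X, Polynomial.eval_C,
      Polynomial.eval_finset_sum, Polynomial.eval_mul, Polynomial.eval_pow] at heval
    rw [heval]
    have hpt : ∀ t ∈ Finset.range m, s i ^ t * s i ^ (m - 1 - t) = s i ^ (m - 1) := by
      intro t ht
      rw [← pow_add]
      congr 1
      have := Finset.mem_range.mp ht
      omega
    rw [Finset.sum_congr rfl hpt, Finset.sum_const, Finset.card_range, nsmul_eq_mul]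
  have hL2 : ∀ i : Fin m, ∏ j ∈ Finset.univ.erase i, ((s i - s j) * (s j)⁻¹) = (m : F) := by
    intro i
    rw [Finset.prod_mul_distrib, hL1 i]
    have hprod_erase : ∏ j ∈ Finset.univ.erase i, s j = (s i)⁻¹ := by
      have h := Finset.mul_prod_erase Finset.univ s (Finset.mem_univ i)
      rw [hprodall] at h
      exact eq_inv_of_mul_eq_one_right h
    rw [Finset.prod_inv_distrib, hprod_erase, inv_inv, mul_assoc, ← pow_succ]
    have hmm : m - 1 + 1 = m := by omega
    rw [hmm, hsm, mul_one]
  -- the index bijection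
  set K : Fin m → ℕ := fun b => if Even (b : ℕ) then (b : ℕ) else (b : ℕ) + m with hKdef
  set ψ : Fin m → Fin m := fun t => ⟨2 * (t : ℕ) % m, Nat.mod_lt _ (by omega)⟩ with hψdef
  have hKψ : ∀ t : Fin m, K (ψ t) = 2 * (t : ℕ) := by
    intro t
    have ht := t.isLt
    have hψval : ((ψ t) : ℕ) = 2 * (t : ℕ) % m := rfl
    simp only [hKdef]
    rcases lt_or_ge (2 * (t : ℕ)) m with h | h
    · have hb : 2 * (t : ℕ) % m = 2 * (t : ℕ) := Nat.mod_eq_of_lt h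
      rw [hψval, hb, if_pos ⟨(t : ℕ), two_mul _⟩]
    · have hb : 2 * (t : ℕ) % m = 2 * (t : ℕ) - m := by
        rw [Nat.mod_eq_sub_mod h, Nat.mod_eq_of_lt (by omega)]
      rw [hψval, hb, if_neg ?_]
      · omega
      · rw [Nat.even_iff]
        omega
  have hψbij : Function.Bijective ψ := by
    rw [Fintype.bijective_iff_injective_and_card]
    refine ⟨fun t₁ t₂ h12 => ?_, rfl⟩
    have hval : 2 * (t₁ : ℕ) % m = 2 * (t₂ : ℕ) % m := by
      have := congrArg Fin.val h12
      simpa [hψdef] using this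
    have hcop : Nat.gcd m 2 = 1 := Nat.coprime_comm.mp
      (Nat.coprime_two_left.mpr (Nat.odd_iff.mpr hmodd))
    have hmod : (t₁ : ℕ) ≡ (t₂ : ℕ) [MOD m] :=
      Nat.ModEq.cancel_left_of_coprime hcop hval
    have := hmod
    unfold Nat.ModEq at this
    rw [Nat.mod_eq_of_lt t₁.isLt, Nat.mod_eq_of_lt t₂.isLt] at this
    exact Fin.ext this
  -- the matrices
  set A : Matrix (Fin m) (Fin m) F :=
    Matrix.of (fun i b => s i ^ e * ((s i)⁻¹) ^ (b : ℕ)) with hAdef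
  set W : Matrix (Fin m) (Fin m) F :=
    Matrix.of (fun b j => (2 * (e.choose (K b) : F)) * s j ^ (b : ℕ)) with hWdef
  have hTAW : (Matrix.of fun i j => (s i + s j) ^ e + (s i - s j) ^ e) = A * W := by
    ext i j
    rw [Matrix.mul_apply]
    simp only [hAdef, hWdef, Matrix.of_apply]
    have hterm : ∀ t : Fin m,
        2 * (e.choose (2 * (t : ℕ)) : F) * s i ^ (e + 2 * m - 2 * (t : ℕ)) * s j ^ (2 * (t : ℕ))
          = (s i ^ e * ((s i)⁻¹) ^ (((ψ t) : ℕ)))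
            * (2 * (e.choose (K (ψ t)) : F) * s j ^ (((ψ t) : ℕ))) := by
      intro t
      have hKt := hKψ t
      have hψval : ((ψ t) : ℕ) = 2 * (t : ℕ) % m := rfl
      have hsj : s j ^ (((ψ t)) : ℕ) = s j ^ (2 * (t : ℕ)) := by rw [hψval, hpow_mod]
      have hsi : ((s i)⁻¹) ^ (((ψ t)) : ℕ) = (s i ^ (2 * (t : ℕ)))⁻¹ := by
        rw [inv_pow, hψval, hpow_mod]
      have hkey : s i ^ (e + 2 * m - 2 * (t : ℕ)) * s i ^ (2 * (t : ℕ)) = s i ^ e := by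
        rw [← pow_add]
        have harith : e + 2 * m - 2 * (t : ℕ) + 2 * (t : ℕ) = e + 2 * m := by
          have := t.isLt; omega
        rw [harith, pow_add, mul_comm 2 m, pow_mul, hsm, one_pow, mul_one]
      have hsi2 : s i ^ e * (s i ^ (2 * (t : ℕ)))⁻¹ = s i ^ (e + 2 * m - 2 * (t : ℕ)) :=
        (mul_inv_eq_iff_eq_mul₀ (pow_ne_zero _ (hs0 i))).mpr hkey.symm
      rw [hKt, hsj, hsi]
      rw [show s i ^ e * (s i ^ (2 * (t : ℕ)))⁻¹ * (2 * (e.choose (2 * (t : ℕ)) : F)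
            * s j ^ (2 * (t : ℕ)))
          = (s i ^ e * (s i ^ (2 * (t : ℕ)))⁻¹) * (2 * (e.choose (2 * (t : ℕ)) : F)
            * s j ^ (2 * (t : ℕ))) from by ring]
      rw [hsi2]
      ring
    have hsum1 : ∑ b : Fin m, (s i ^ e * ((s i)⁻¹) ^ ((b : ℕ)))
          * (2 * (e.choose (K b) : F) * s j ^ ((b : ℕ)))
        = ∑ t ∈ Finset.range m,
            2 * (e.choose (2 * t) : F) * s i ^ (e + 2 * m - 2 * t) * s j ^ (2 * t) := by
      rw [← Fin.sum_univ_eq_sum_range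
        (fun t => 2 * (e.choose (2 * t) : F) * s i ^ (e + 2 * m - 2 * t) * s j ^ (2 * t)) m]
      exact (Fintype.sum_bijective ψ hψbij _ _ hterm).symm
    rw [hsum1]
    have hbinom : (s i + s j) ^ e + (s i - s j) ^ e
        = ∑ k ∈ Finset.range (e + 1),
            ((1 + (-1 : F) ^ k) * (s j ^ k * s i ^ (e - k) * (e.choose k : F))) := by
      rw [add_comm (s i) (s j), add_pow]
      rw [show s i - s j = -s j + s i from by ring, add_pow]
      rw [← Finset.sum_add_distrib]
      refine Finset.sum_congr rfl fun k hk => ?_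
      rw [neg_pow]
      ring
    rw [hbinom]
    have hstep2a : ∑ k ∈ Finset.range (e + 1),
          ((1 + (-1 : F) ^ k) * (s j ^ k * s i ^ (e - k) * (e.choose k : F)))
        = ∑ k ∈ Finset.range (e + 1),
            ((1 + (-1 : F) ^ k) * (s j ^ k * s i ^ (e + 2 * m - k) * (e.choose k : F))) := by
      refine Finset.sum_congr rfl fun k hk => ?_
      have hk' := Finset.mem_range.mp hk
      have hpw : s i ^ (e + 2 * m - k) = s i ^ (e - k) := by
        rw [show e + 2 * m - k = (e - k) + 2 * m from by omega, pow_add,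
          mul_comm 2 m, pow_mul, hsm, one_pow, mul_one]
      rw [hpw]
    have hstep2b : ∑ k ∈ Finset.range (e + 1),
          ((1 + (-1 : F) ^ k) * (s j ^ k * s i ^ (e + 2 * m - k) * (e.choose k : F)))
        = ∑ k ∈ Finset.range (2 * m),
            ((1 + (-1 : F) ^ k) * (s j ^ k * s i ^ (e + 2 * m - k) * (e.choose k : F))) := by
      refine Finset.sum_subset (Finset.range_subset_range.mpr (by omega)) ?_
      intro k hk hk'
      have hck : e.choose k = 0 := by
        refine Nat.choose_eq_zero_of_lt ?_
        simp only [Finset.mem_range] at hk hk'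
        omega
      rw [hck]
      simp
    rw [hstep2a, hstep2b, sum_range_two_mul' m
      (fun k => (1 + (-1 : F) ^ k) * (s j ^ k * s i ^ (e + 2 * m - k) * (e.choose k : F)))]
    refine Finset.sum_congr rfl fun t ht => ?_
    have hodd : (1 + (-1 : F) ^ (2 * t + 1)) = 0 := by
      rw [pow_succ, pow_mul]
      norm_num
    have heven : (1 + (-1 : F) ^ (2 * t)) = 2 := by
      rw [pow_mul]
      norm_num
    rw [hodd, heven]
    ring
  -- determinants
  have hdetA : A.det = (∏ i, s i ^ e) * (Matrix.vandermonde (fun i => (s i)⁻¹)).det := by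
    have hAv : A = Matrix.of fun i b =>
        (fun i => s i ^ e) i * (Matrix.vandermonde fun i => (s i)⁻¹) i b := by
      ext i b
      simp [hAdef, Matrix.vandermonde_apply]
    rw [hAv, Matrix.det_mul_column]
  have hdetW : W.det = (∏ b, (2 * (e.choose (K b) : F))) * (Matrix.vandermonde s).det := by
    have hWv : W = Matrix.of fun b j =>
        (fun b => 2 * (e.choose (K b) : F)) b * ((Matrix.vandermonde s).transpose b j) := by
      ext b j
      simp [hWdef, Matrix.vandermonde_apply, Matrix.transpose_apply]
    rw [hWv, Matrix.det_mul_column, Matrix.det_transpose]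
  have hvv : (Matrix.vandermonde (fun i => (s i)⁻¹)).det * (Matrix.vandermonde s).det
      = ((m : ℕ) : F) ^ m := by
    rw [Matrix.det_vandermonde, Matrix.det_vandermonde, ← Finset.prod_mul_distrib]
    have h1 : ∀ i : Fin m, (∏ j ∈ Finset.Ioi i, ((s j)⁻¹ - (s i)⁻¹))
          * (∏ j ∈ Finset.Ioi i, (s j - s i))
        = ∏ j ∈ Finset.Ioi i,
            (((fun a b => (s a - s b) * (s b)⁻¹) i j) * ((fun a b => (s a - s b) * (s b)⁻¹) j i)) := by
      intro i
      rw [← Finset.prod_mul_distrib]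
      refine Finset.prod_congr rfl fun j hj => ?_
      have hi := hs0 i
      have hj' := hs0 j
      field_simp
    rw [Finset.prod_congr rfl fun i _ => h1 i,
      prod_Ioi_pair_eq_prod_erase (fun a b => (s a - s b) * (s b)⁻¹)]
    rw [Finset.prod_congr rfl fun i _ => hL2 i, Finset.prod_const]
    simp
  have hchoose : (∏ b, (e.choose (K b) : F)) = ∏ k ∈ Finset.range m, ((r + 2 * k).choose r : F) := by
    have h1 : ∀ t : Fin m, ((r + 2 * (t : ℕ)).choose r : F) = (e.choose (K (ψ t)) : F) := by
      intro t
      have h2t : 2 * (t : ℕ) < q := by have := t.isLt; omega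
      have hck := choose_cast_key p F hq r (by omega) (2 * (t : ℕ)) h2t
      rw [← hedef] at hck
      rw [hKψ t, hck, pow_mul]
      norm_num
    rw [← Fintype.prod_bijective ψ hψbij _ _ h1]
    exact Fin.prod_univ_eq_prod_range (fun k => ((r + 2 * k).choose r : F)) m
  calc (Matrix.of fun i j => (s i + s j) ^ e + (s i - s j) ^ e).det
      = A.det * W.det := by rw [hTAW, Matrix.det_mul]
    _ = (∏ i, s i ^ e) * ((∏ b, (2 * (e.choose (K b) : F))) *
          ((Matrix.vandermonde (fun i => (s i)⁻¹)).det * (Matrix.vandermonde s).det)) := by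
        rw [hdetA, hdetW]; ring
    _ = (-1 : F) ^ m * ∏ k ∈ Finset.range m, ((r + 2 * k).choose r : F) := by
        rw [hvv]
        have hse : (∏ i, s i ^ e) = 1 := by
          rw [Finset.prod_pow, hprodall, one_pow]
        have hd2 : (∏ b, (2 * (e.choose (K b) : F)))
            = 2 ^ m * ∏ b, (e.choose (K b) : F) := by
          rw [Finset.prod_mul_distrib, Finset.prod_const]
          simp
        rw [hse, hd2, hchoose, one_mul]
        have h2m : (2 : F) ^ m * ((m : ℕ) : F) ^ m = (-1 : F) ^ m := by
          rw [← mul_pow]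
          congr 1
          rw [← hneg]
          push_cast
          ring
        linear_combination (∏ k ∈ Finset.range m, ((r + 2 * k).choose r : F)) * h2m

/-- For `q = p^n ≡ 3 (mod 4)` and `1 ≤ r ≤ q-2`, the matrix
`T = [(s_i+s_j)^{q-1-r} + (s_i-s_j)^{q-1-r}]` over `F_q` (with `s_i` the nonzero squares)
satisfies `det T = (-1)^{(q-1)/2} ∏_{k=0}^{(q-3)/2} binom(r+2k, r)`, the binomial
coefficients being interpreted in `F_p ⊆ F_q`. -/
theorem det_T_q_2_eq_prod_binom (p n q : ℕ) [Fact p.Prime] (hn : 0 < n) (hq : q = p ^ n)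
    (hq3 : q % 4 = 3)
    (F : Type*) [Field F] [Fintype F] (hcard : Fintype.card F = q)
    (r : ℕ) (hr1 : 1 ≤ r) (hr2 : r ≤ q - 2)
    (s : Fin ((q - 1) / 2) → F) (hs : Function.Injective s)
    (hsimg : ∀ x : F, (∃ i, s i = x) ↔ ∃ y : F, y ≠ 0 ∧ y ^ 2 = x) :
    (Matrix.of fun i j => (s i + s j) ^ (q - 1 - r) + (s i - s j) ^ (q - 1 - r)).det
      = (-1 : F) ^ ((q - 1) / 2)
          * ∏ k ∈ Finset.range ((q - 1) / 2), ((r + 2 * k).choose r : F) := by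
  exact det_aux p n q ((q - 1) / 2) hn hq hq3 (by omega) F hcard r hr1 hr2 s hs hsimg
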